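/- In Nim on graphs played on a path with an even number of edges, all of whose edges have positive integer weight, with the indicator piece starting at an endpoint, the second player (the player not to move) has a winning strategy; i.e., the starting position is a 0-position. -/
import Mathlib


/-- A position of Nim on graphs: a symmetric non-negative integer weight
function on pairs of vertices (the weighted graph; weight-zero pairs are
non-edges) plus the location of the indicator piece. -/
structure NimPos (V : Type) where
  w : V → V → ℕ
  symm : ∀ u v, w u v = w v u
  pos : V

/-- A legal move: decrease the weight of an edge incident with the piece to a
strictly smaller value and move the piece along it; all other weights stay. -/
def NimMove {V : Type} (p q : NimPos V) : Prop :=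
  p.pos ≠ q.pos ∧
  q.w p.pos q.pos < p.w p.pos q.pos ∧
  ∀ u v, ¬((u = p.pos ∧ v = q.pos) ∨ (u = q.pos ∧ v = p.pos)) → q.w u v = p.w u v

/-- The player to move loses (the position is a 0-position): the opponent has
a winning strategy `f` answering every move. -/
inductive MoverLoses {V : Type} : NimPos V → Prop
  | intro (p : NimPos V) (f : ∀ q, NimMove p q → NimPos V)
      (hmove : ∀ q (h : NimMove p q), NimMove q (f q h))
      (hwin : ∀ q (h : NimMove p q), MoverLoses (f q h)) : MoverLoses p

/-- The player to move wins (the position is a p-position). -/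
def MoverWins {V : Type} (p : NimPos V) : Prop :=
  ∃ q, NimMove p q ∧ MoverLoses q

/-- Weights of the path on vertices `0,…,n` of `Fin (n+1)`: edge `i — i+1` has weight `ω i`. -/
def pathW (n : ℕ) (ω : ℕ → ℕ) (u v : Fin (n+1)) : ℕ :=
  if u.val + 1 = v.val then ω u.val
  else if v.val + 1 = u.val then ω v.val else 0

theorem pathW_symm (n : ℕ) (ω : ℕ → ℕ) : ∀ u v, pathW n ω u v = pathW n ω v u := by
  intro u v; unfold pathW; split_ifs <;> first | rfl | (exfalso; omega)

/-- Weights of the cycle on `Fin m` (`m ≥ 3`): edge `i — (i+1) % m` has weight `ω i`. -/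
def cycW (m : ℕ) (ω : ℕ → ℕ) (u v : Fin m) : ℕ :=
  (if (u.val + 1) % m = v.val then ω u.val else 0) +
  (if (v.val + 1) % m = u.val then ω v.val else 0)

theorem cycW_symm (m : ℕ) (ω : ℕ → ℕ) : ∀ u v, cycW m ω u v = cycW m ω v u :=
  fun _ _ => Nat.add_comm _ _

/-- Weight-1 complete bipartite graph `K_{2,j}`: part `{0,1}` and part `{2,…,j+1}`. -/
def k2W (j : ℕ) (u v : Fin (j+2)) : ℕ :=
  if (u.val < 2 ∧ 2 ≤ v.val) ∨ (v.val < 2 ∧ 2 ≤ u.val) then 1 else 0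

theorem k2W_symm (j : ℕ) : ∀ u v, k2W j u v = k2W j v u := by
  intro u v; unfold k2W; split_ifs <;> omega

/-- Weight-1 `SSB_j = K_{2,j} + e_{12}`: `K_{2,j}` plus the edge `0 — 1`. -/
def ssbW (j : ℕ) (u v : Fin (j+2)) : ℕ :=
  if ((u.val < 2 ∧ 2 ≤ v.val) ∨ (v.val < 2 ∧ 2 ≤ u.val)) ∨
      (u.val < 2 ∧ v.val < 2 ∧ u.val ≠ v.val) then 1 else 0

theorem ssbW_symm (j : ℕ) : ∀ u v, ssbW j u v = ssbW j v u := by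
  intro u v; unfold ssbW; split_ifs <;> omega

/-- Weight-1 complete graph `K_n`. -/
def knW (n : ℕ) (u v : Fin n) : ℕ := if u.val ≠ v.val then 1 else 0

theorem knW_symm (n : ℕ) : ∀ u v, knW n u v = knW n v u := by
  intro u v; unfold knW; split_ifs <;> omega

/-- Length of the maximal all-positive run of cycle edges clockwise from vertex `s`. -/
noncomputable def fwdLen (m : ℕ) (w : ℕ → ℕ) (s : ℕ) : ℕ :=
  sSup {d | d ≤ m ∧ ∀ i < d, 0 < w ((s + i) % m)}

/-- Length of the maximal all-positive run of cycle edges counterclockwise from vertex `s`. -/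
noncomputable def bwdLen (m : ℕ) (w : ℕ → ℕ) (s : ℕ) : ℕ :=
  sSup {d | d ≤ m ∧ ∀ i < d, 0 < w ((s + m - 1 - i) % m)}

/-- Update the weight of edge `a — b` (both orientations) to `m`. -/
def setEdge {V : Type} [DecidableEq V] (w : V → V → ℕ) (a b : V) (m : ℕ) :
    V → V → ℕ := fun u v => if (u = a ∧ v = b) ∨ (u = b ∧ v = a) then m else w u v

lemma setEdge_symm {V : Type} [DecidableEq V] (w : V → V → ℕ)
    (hw : ∀ u v, w u v = w v u) (a b : V) (m : ℕ) :
    ∀ u v, setEdge w a b m u v = setEdge w a b m v u := by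
  intro u v; unfold setEdge; split_ifs with h1 h2 h2 <;> first | rfl | tauto

lemma setEdge_ab {V : Type} [DecidableEq V] (w : V → V → ℕ) (a b : V) (m : ℕ) :
    setEdge w a b m a b = m := by
  unfold setEdge; exact if_pos (Or.inl ⟨rfl, rfl⟩)

lemma key (n d : ℕ) : ∀ k, n = 2*k + 2*d → ∀ p : NimPos (Fin (n+1)),
    p.pos.val = 2*k →
    (∀ u v : Fin (n+1), ¬(u.val+1 = v.val ∨ v.val+1 = u.val) → p.w u v = 0) →
    (∀ u v : Fin (n+1), 2*k ≤ u.val → u.val+1 = v.val → 0 < p.w u v) →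
    (∀ u v : Fin (n+1), u.val+1 = 2*k → v.val = 2*k → p.w u v = 0) →
    MoverLoses p := by
  induction d with
  | zero =>
    intro k hn p hpos hA hB hC
    have hno : ∀ q, ¬ NimMove p q := by
      intro q ⟨hne, hlt, _⟩
      have hq : q.pos.val ≤ n := by omega
      have hne' : q.pos.val ≠ p.pos.val := fun h => hne (Fin.ext h.symm)
      rcases Classical.em (p.pos.val + 1 = q.pos.val ∨ q.pos.val + 1 = p.pos.val) with hadj | hadj
      · rcases hadj with h1 | h1
        · omega
        · have := hC q.pos p.pos (by omega) (by omega)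
          rw [p.symm] at this; omega
      · have := hA p.pos q.pos hadj; omega
    exact MoverLoses.intro p (fun q _ => q)
      (fun q h => absurd h (hno q)) (fun q h => absurd h (hno q))
  | succ d ih =>
    intro k hn p hpos hA hB hC
    have h1n : 2*k+1 ≤ n := by omega
    have h2n : 2*k+2 ≤ n := by omega
    set a : Fin (n+1) := ⟨2*k+1, by omega⟩ with ha
    set b : Fin (n+1) := ⟨2*k+2, by omega⟩ with hb
    have hav : (a : Fin (n+1)).val = 2*k+1 := rfl
    have hbv : (b : Fin (n+1)).val = 2*k+2 := rfl
    -- any legal move goes to vertex 2k+1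
    have hstep : ∀ q, NimMove p q → q.pos = a := by
      intro q ⟨hne, hlt, _⟩
      have hposi : 0 < p.w p.pos q.pos := by omega
      have hne' : q.pos.val ≠ p.pos.val := fun h => hne (Fin.ext h.symm)
      apply Fin.ext
      by_contra hq
      rcases Classical.em (p.pos.val + 1 = q.pos.val ∨ q.pos.val + 1 = p.pos.val) with hadj | hadj
      · rcases hadj with h1 | h1
        · exact hq (by omega)
        · have := hC q.pos p.pos (by omega) (by omega)
          rw [p.symm] at this; omega
      · have := hA p.pos q.pos hadj; omega
    -- the responder's reply
    refine MoverLoses.intro p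
      (fun q h => ⟨setEdge q.w a b 0, setEdge_symm q.w q.symm a b 0, b⟩) ?_ ?_
    all_goals
      intro q h
      have hqa := hstep q h
      have hq1 : q.pos.val = 2*k+1 := by rw [hqa]
      obtain ⟨hne, hlt, hrest⟩ := h
      have hqab : q.w a b = p.w a b := by
        apply hrest
        rintro (⟨h1, h2⟩ | ⟨h1, h2⟩)
        · have e2 := congrArg Fin.val h2; omega
        · have e2 := congrArg Fin.val h2; omega
      have hab : 0 < q.w a b := by
        rw [hqab]; exact hB a b (by omega) (by omega)
    -- hmove
    · show NimMove q ⟨setEdge q.w a b 0, setEdge_symm q.w q.symm a b 0, b⟩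
      refine ⟨?_, ?_, ?_⟩
      · show q.pos ≠ b
        intro hcon
        have := congrArg Fin.val hcon; omega
      · show setEdge q.w a b 0 q.pos b < q.w q.pos b
        rw [hqa, setEdge_ab]
        exact hab
      · intro u v huv
        show setEdge q.w a b 0 u v = q.w u v
        unfold setEdge
        rw [if_neg]
        rintro (⟨h1, h2⟩ | ⟨h1, h2⟩)
        · exact huv (Or.inl ⟨h1.trans hqa.symm, h2⟩)
        · exact huv (Or.inr ⟨h1, h2.trans hqa.symm⟩)
    -- hwin
    · show MoverLoses (⟨setEdge q.w a b 0, setEdge_symm q.w q.symm a b 0, b⟩ :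
        NimPos (Fin (n+1)))
      apply ih (k+1) (by omega)
      · show (b : Fin (n+1)).val = 2*(k+1)
        omega
      · -- (A)
        intro u v hna
        show setEdge q.w a b 0 u v = 0
        unfold setEdge
        split_ifs with hs
        · rfl
        · rw [hrest u v, hA u v hna]
          rintro (⟨h1, h2⟩ | ⟨h1, h2⟩)
          · refine hna (Or.inl ?_)
            have e1 := congrArg Fin.val h1
            have e2 := congrArg Fin.val h2
            omega
          · refine hna (Or.inr ?_)
            have e1 := congrArg Fin.val h1
            have e2 := congrArg Fin.val h2
            omega
      · -- (B)
        intro u v hu huv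
        show 0 < setEdge q.w a b 0 u v
        unfold setEdge
        rw [if_neg, hrest u v]
        · exact hB u v (by omega) huv
        · rintro (⟨h1, h2⟩ | ⟨h1, h2⟩)
          · have e1 := congrArg Fin.val h1; omega
          · have e1 := congrArg Fin.val h1; omega
        · rintro (⟨h1, h2⟩ | ⟨h1, h2⟩)
          · have e1 := congrArg Fin.val h1; omega
          · have e1 := congrArg Fin.val h1; omega
      · -- (C)
        intro u v hu hv
        show setEdge q.w a b 0 u v = 0
        unfold setEdge
        rw [if_pos]
        left
        exact ⟨Fin.ext (by omega), Fin.ext (by omega)⟩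


/-- Nim on a path with an even number `n` of edges, all weights
positive, piece starting at an endpoint: the starting position is a 0-position
(the second player wins). -/
theorem stmt1 (n : ℕ) (hn : Even n) (ω : ℕ → ℕ) (hω : ∀ i < n, 0 < ω i) :
    MoverLoses ⟨pathW n ω, pathW_symm n ω, (0 : Fin (n+1))⟩ := by
  obtain ⟨m, hm⟩ := hn
  apply key n m 0 (by omega)
  · rfl
  · intro u v hna
    show pathW n ω u v = 0
    unfold pathW; split_ifs <;> first | rfl | omega
  · intro u v _ huv
    show 0 < pathW n ω u v
    unfold pathW
    rw [if_pos huv]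
    exact hω u.val (by omega)
  · intro u v hu _
    omega
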